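/- Let B be a number field with [B : ℚ] = 9, containing two distinct subfields k and K, each Galois over ℚ with [k : ℚ] = [K : ℚ] = 3. Let p be a prime number totally ramified in both, say p·O_k = 𝔭³ and p·O_K = 𝔮³ for prime ideals 𝔭 of O_k and 𝔮 of O_K, and suppose 𝔮 is a principal ideal of O_K. Then the extended ideal 𝔭·O_B is a principal ideal of O_B (i.e., the class of 𝔭 capitulates in B). -/

import Mathlib

open NumberField

open UniqueFactorizationMonoid in
lemma aux_pow_assoc {α : Type*} [CommMonoidWithZero α] [UniqueFactorizationMonoid α]
    [NormalizationMonoid α] [DecidableEq α] {a b : α} {n : ℕ} (hn : n ≠ 0)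
    (ha : a ≠ 0) (hb : b ≠ 0) (h : a ^ n = b ^ n) : Associated a b := by
  apply associated_of_factorization_eq a b ha hb
  have h2 := congrArg factorization h
  rw [factorization_pow, factorization_pow] at h2
  ext q
  have h3 := DFunLike.congr_fun h2 q
  simp only [Finsupp.smul_apply, smul_eq_mul] at h3
  exact Nat.eq_of_mul_eq_mul_left (Nat.pos_of_ne_zero hn) h3

theorem stmt_16 (B : Type*) [Field B] [NumberField B]
    (hdegB : Module.finrank ℚ B = 9)
    (k K : IntermediateField ℚ B) (hne : k ≠ K)
    [NumberField ↥k] [NumberField ↥K] [IsGalois ℚ ↥k] [IsGalois ℚ ↥K]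
    (hdegk : Module.finrank ℚ ↥k = 3) (hdegK : Module.finrank ℚ ↥K = 3)
    (p : ℕ) (hp : p.Prime)
    (𝔭 : Ideal (𝓞 ↥k)) (𝔮 : Ideal (𝓞 ↥K)) (h1 : 𝔭.IsPrime) (h2 : 𝔮.IsPrime)
    (hr1 : Ideal.span {(p : 𝓞 ↥k)} = 𝔭 ^ 3)
    (hr2 : Ideal.span {(p : 𝓞 ↥K)} = 𝔮 ^ 3)
    (hprin : 𝔮.IsPrincipal) :
    (Ideal.map (RingOfIntegers.mapRingHom (algebraMap ↥k B)) 𝔭).IsPrincipal := by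
  classical
  set f := RingOfIntegers.mapRingHom (algebraMap (↥k) B) with hf
  set g := RingOfIntegers.mapRingHom (algebraMap (↥K) B) with hg
  have hpB : (p : 𝓞 B) ≠ 0 := Nat.cast_ne_zero.mpr hp.ne_zero
  have h3 : (Ideal.map f 𝔭) ^ 3 = Ideal.span {(p : 𝓞 B)} := by
    rw [← Ideal.map_pow, ← hr1, Ideal.map_span, Set.image_singleton, map_natCast]
  have h4 : (Ideal.map g 𝔮) ^ 3 = Ideal.span {(p : 𝓞 B)} := by
    rw [← Ideal.map_pow, ← hr2, Ideal.map_span, Set.image_singleton, map_natCast]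
  have hsne : Ideal.span {(p : 𝓞 B)} ≠ 0 := by
    simpa [Ideal.zero_eq_bot, Ideal.span_singleton_eq_bot] using hpB
  have hEq : Ideal.map f 𝔭 = Ideal.map g 𝔮 := by
    apply associated_iff_eq.mp
    refine aux_pow_assoc (n := 3) (by norm_num) ?_ ?_ (h3.trans h4.symm)
    · intro h
      rw [h, zero_pow (by norm_num)] at h3
      exact hsne h3.symm
    · intro h
      rw [h, zero_pow (by norm_num)] at h4
      exact hsne h4.symm
  obtain ⟨a, ha⟩ := hprin
  refine ⟨g a, ?_⟩
  rw [hEq, ha]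
  simp [Ideal.map_span, Ideal.submodule_span_eq]
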